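/- Let g ∈ L²(ℝ) and a,b > 0, and for k ∈ ℤ define H_k(x) = ∑_{n∈ℤ} g(x−na)·conj(g(x−na−k/b)). Then for every continuous compactly supported function f on ℝ, ∑_{k∈ℤ,k≠0} |∫ conj(f(x)) f(x−k/b) H_k(x) dx| ≤ ∫ |f(x)|² ∑_{k∈ℤ,k≠0} |H_k(x)| dx. -/

import Mathlib

noncomputable section
open MeasureTheory Complex Filter Set
open scoped ENNReal NNReal ComplexConjugate Topology


/-- `H_k(x) = ∑ₙ g(x - n a) · conj (g (x - n a - k / b))`. -/
def Hfun (g : ℝ → ℂ) (a b : ℝ) (k : ℤ) (x : ℝ) : ℂ :=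
  ∑' n : ℤ, g (x - (n : ℝ) * a) * conj (g (x - (n : ℝ) * a - (k : ℝ) / b))

/-- Symmetry: `H_{-k}(y) = conj (H_k (y + k/b))`. -/
lemma Hfun_neg (g : ℝ → ℂ) (a b : ℝ) (k : ℤ) (y : ℝ) :
    Hfun g a b (-k) y = conj (Hfun g a b k (y + (k : ℝ) / b)) := by
  unfold Hfun
  rw [show (conj (∑' n : ℤ, g (y + (k : ℝ) / b - (n : ℝ) * a) *
      conj (g (y + (k : ℝ) / b - (n : ℝ) * a - (k : ℝ) / b)))) =
      ∑' n : ℤ, conj (g (y + (k : ℝ) / b - (n : ℝ) * a) *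
      conj (g (y + (k : ℝ) / b - (n : ℝ) * a - (k : ℝ) / b))) from tsum_star]
  refine tsum_congr fun n => ?_
  push_cast
  rw [map_mul, Complex.conj_conj,
    mul_comm ((starRingEnd ℂ) (g (y + (k : ℝ) / b - (n : ℝ) * a))),
    show y + (k : ℝ) / b - (n : ℝ) * a - (k : ℝ) / b = y - (n : ℝ) * a by ring,
    show y - (n : ℝ) * a - -(k : ℝ) / b = y + (k : ℝ) / b - (n : ℝ) * a by ring]

lemma two_mul_le_sq_add_sq (x y : ℝ≥0∞) : 2 * (x * y) ≤ x ^ 2 + y ^ 2 := by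
  rcases eq_or_ne x ⊤ with rfl | hx
  · rcases eq_or_ne y 0 with rfl | hy
    · simp
    · have : (⊤ : ℝ≥0∞) ^ 2 = ⊤ := by simp
      rw [this]; exact le_top.trans (le_add_right le_rfl)
  rcases eq_or_ne y ⊤ with rfl | hy
  · rcases eq_or_ne x 0 with rfl | hx0
    · simp
    · have : (⊤ : ℝ≥0∞) ^ 2 = ⊤ := by simp
      rw [this]; exact le_top.trans (le_add_left le_rfl)
  lift x to ℝ≥0 using hx
  lift y to ℝ≥0 using hy
  rw [show ((2 : ℝ≥0∞)) = ((2 : ℝ≥0) : ℝ≥0∞) by norm_num]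
  rw [← ENNReal.coe_mul, ← ENNReal.coe_mul, ← ENNReal.coe_pow, ← ENNReal.coe_pow,
    ← ENNReal.coe_add, ENNReal.coe_le_coe, ← NNReal.coe_le_coe]
  push_cast
  nlinarith [sq_nonneg ((x : ℝ) - (y : ℝ)), x.coe_nonneg, y.coe_nonneg]

set_option maxHeartbeats 1000000 in
/-- A countable sum of measurable `ℂ`-valued functions is measurable. -/
lemma measurable_tsum_complex (F : ℤ → ℝ → ℂ) (hF : ∀ n, Measurable (F n)) :
    Measurable fun x => ∑' n : ℤ, F n x := by
  classical
  set e : ℕ ≃ ℤ := (Denumerable.eqv ℤ).symm with he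
  set S : Set ℝ := {x | (∑' n : ℤ, (‖F n x‖₊ : ℝ≥0∞)) ≠ ∞} with hS
  have hSmeas : MeasurableSet S := by
    have : Measurable fun x => ∑' n : ℤ, (‖F n x‖₊ : ℝ≥0∞) :=
      Measurable.ennreal_tsum fun n => (hF n).enorm
    exact this (measurableSet_singleton ∞).compl
  have hsum : ∀ x ∈ S, Summable fun n : ℤ => F n x := by
    intro x hx
    exact Summable.of_nnnorm (ENNReal.tsum_coe_ne_top_iff_summable.1 hx)
  have hnot : ∀ x ∉ S, ¬ Summable fun n : ℤ => F n x := by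
    intro x hx hcon
    apply hx
    have h1 : Summable fun n : ℤ => ‖F n x‖ := summable_norm_iff.2 hcon
    have h2 : Summable fun n : ℤ => ‖F n x‖₊ := by
      rw [← NNReal.summable_coe]
      simpa [coe_nnnorm] using h1
    exact ENNReal.tsum_coe_ne_top_iff_summable.2 h2
  set q : ℕ → ℝ → ℂ := fun N x =>
    if x ∈ S then ∑ n ∈ Finset.range N, F (e n) x else 0 with hq
  have hqmeas : ∀ N, Measurable (q N) := by
    intro N
    exact Measurable.ite hSmeas
      (Finset.measurable_sum _ fun n _ => hF (e n)) measurable_const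
  have htend : ∀ x, Tendsto (fun N => q N x) atTop (𝓝 (∑' n : ℤ, F n x)) := by
    intro x
    by_cases hx : x ∈ S
    · have hs : HasSum (fun n : ℤ => F n x) (∑' n : ℤ, F n x) := (hsum x hx).hasSum
      have hs' : HasSum (fun n : ℕ => F (e n) x) (∑' n : ℤ, F n x) :=
        (Equiv.hasSum_iff e).2 hs
      have := hs'.tendsto_sum_nat
      refine this.congr fun N => ?_
      simp [hq, hx]
    · rw [tsum_eq_zero_of_not_summable (hnot x hx)]
      have : ∀ N, q N x = 0 := fun N => by simp [hq, hx]
      simp only [this]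
      exact tendsto_const_nhds
  exact measurable_of_tendsto_metrizable hqmeas (tendsto_pi_nhds.2 htend)

/-- `Hfun` is a.e.-measurable when `g` is a.e. strongly measurable. -/
lemma Hfun_aemeasurable {g : ℝ → ℂ} (hg : AEStronglyMeasurable g (volume : Measure ℝ))
    (a b : ℝ) (k : ℤ) : AEMeasurable (Hfun g a b k) (volume : Measure ℝ) := by
  set G : ℝ → ℂ := hg.mk g with hGdef
  have hGsm : StronglyMeasurable G := hg.stronglyMeasurable_mk
  have hgG : g =ᵐ[volume] G := hg.ae_eq_mk
  have hGm : Measurable G := hGsm.measurable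
  -- a.e. equality of translates
  have hc : ∀ c : ℝ, (fun x => g (x - c)) =ᵐ[volume] fun x => G (x - c) := by
    intro c
    exact (measurePreserving_sub_right volume c).quasiMeasurePreserving.ae_eq_comp hgG
  have hall : ∀ᵐ x ∂(volume : Measure ℝ), ∀ n : ℤ,
      g (x - (n : ℝ) * a) = G (x - (n : ℝ) * a) ∧
      g (x - (n : ℝ) * a - (k : ℝ) / b) = G (x - (n : ℝ) * a - (k : ℝ) / b) := by
    rw [ae_all_iff]
    intro n
    filter_upwards [hc ((n : ℝ) * a), hc ((n : ℝ) * a + (k : ℝ) / b)] with x h1 h2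
    refine ⟨h1, ?_⟩
    rw [sub_sub]
    exact h2
  have hae : Hfun g a b k =ᵐ[volume] Hfun G a b k := by
    filter_upwards [hall] with x hx
    unfold Hfun
    exact tsum_congr fun n => by rw [(hx n).1, (hx n).2]
  have hmeas : Measurable (Hfun G a b k) := by
    unfold Hfun
    refine measurable_tsum_complex _ fun n => ?_
    have h1 : Measurable fun x : ℝ => G (x - (n : ℝ) * a) :=
      hGm.comp (measurable_id.sub_const _)
    have h2 : Measurable fun x : ℝ => G (x - (n : ℝ) * a - (k : ℝ) / b) :=
      hGm.comp ((measurable_id.sub_const _).sub_const _)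
    simp only [starRingEnd_apply]
    exact h1.mul (continuous_star.measurable.comp h2)
  exact hmeas.aemeasurable.congr hae.symm

/-- The key estimate in Theorem 2.1: for every continuous compactly supported `f`,
`∑_{k≠0} |∫ conj(f(x)) f(x - k/b) H_k(x) dx| ≤ ∫ |f(x)|² ∑_{k≠0} |H_k(x)| dx`. -/
theorem offdiagonal_estimate
    (g : ℝ → ℂ) (hg : MemLp g 2 (volume : Measure ℝ)) (a b : ℝ)
    (ha : 0 < a) (hb : 0 < b)
    (f : ℝ → ℂ) (hf : Continuous f) (hfc : HasCompactSupport f) :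
    ∑' k : {k : ℤ // k ≠ 0},
        (‖∫ x : ℝ, conj (f x) * f (x - (k : ℝ) / b) * Hfun g a b (k : ℤ) x‖₊ : ℝ≥0∞) ≤
      ∫⁻ x : ℝ, (‖f x‖₊ : ℝ≥0∞) ^ 2 *
        ∑' k : {k : ℤ // k ≠ 0}, (‖Hfun g a b (k : ℤ) x‖₊ : ℝ≥0∞) := by
  -- notation
  set A : ℤ → ℝ≥0∞ := fun k => ∫⁻ x : ℝ,
    (‖f x‖₊ : ℝ≥0∞) ^ 2 * (‖Hfun g a b k x‖₊ : ℝ≥0∞) with hA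
  set I : ℤ → ℝ≥0∞ := fun k => ∫⁻ x : ℝ,
    (‖f x‖₊ : ℝ≥0∞) * (‖f (x - (k : ℝ) / b)‖₊ : ℝ≥0∞) * (‖Hfun g a b k x‖₊ : ℝ≥0∞) with hI
  have hHmeas : ∀ k : ℤ, AEMeasurable (Hfun g a b k) (volume : Measure ℝ) :=
    fun k => Hfun_aemeasurable hg.1 a b k
  have hφmeas : ∀ k : ℤ, AEMeasurable
      (fun x : ℝ => (‖f x‖₊ : ℝ≥0∞) ^ 2 * (‖Hfun g a b k x‖₊ : ℝ≥0∞))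
      (volume : Measure ℝ) := by
    intro k
    exact (hf.measurable.enorm.pow_const 2).aemeasurable.mul (hHmeas k).enorm
  -- Step 1: the norm of each integral is bounded by `I k`.
  have step1 : ∀ k : ℤ,
      (‖∫ x : ℝ, conj (f x) * f (x - (k : ℝ) / b) * Hfun g a b k x‖₊ : ℝ≥0∞) ≤ I k := by
    intro k
    refine le_trans (enorm_integral_le_lintegral_enorm _) (le_of_eq ?_)
    refine lintegral_congr fun x => ?_
    simp [nnnorm_mul, ENNReal.coe_mul]
    rfl
  -- translating the second factor
  have hBA : ∀ k : ℤ, (∫⁻ x : ℝ,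
      (‖f (x - (k : ℝ) / b)‖₊ : ℝ≥0∞) ^ 2 * (‖Hfun g a b k x‖₊ : ℝ≥0∞)) = A (-k) := by
    intro k
    have key : ∀ x : ℝ, (‖Hfun g a b k x‖₊ : ℝ≥0∞) =
        (‖Hfun g a b (-k) (x - (k : ℝ) / b)‖₊ : ℝ≥0∞) := by
      intro x
      rw [Hfun_neg g a b k (x - (k : ℝ) / b)]
      simp
    calc (∫⁻ x : ℝ, (‖f (x - (k : ℝ) / b)‖₊ : ℝ≥0∞) ^ 2 * (‖Hfun g a b k x‖₊ : ℝ≥0∞))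
        = ∫⁻ x : ℝ, (fun y => (‖f y‖₊ : ℝ≥0∞) ^ 2 *
            (‖Hfun g a b (-k) y‖₊ : ℝ≥0∞)) (x - (k : ℝ) / b) := by
          refine lintegral_congr fun x => ?_
          rw [key x]
      _ = A (-k) := by
          rw [lintegral_sub_right_eq_self
            (fun y => (‖f y‖₊ : ℝ≥0∞) ^ 2 * (‖Hfun g a b (-k) y‖₊ : ℝ≥0∞)) ((k : ℝ) / b)]
  -- Step 2 : `2 * I k ≤ A k + A (-k)`.
  have step2 : ∀ k : ℤ, 2 * I k ≤ A k + A (-k) := by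
    intro k
    rw [hI]
    rw [← lintegral_const_mul' 2 _ (by norm_num)]
    calc (∫⁻ x : ℝ, 2 * ((‖f x‖₊ : ℝ≥0∞) * (‖f (x - (k : ℝ) / b)‖₊ : ℝ≥0∞) *
            (‖Hfun g a b k x‖₊ : ℝ≥0∞)))
        ≤ ∫⁻ x : ℝ, (‖f x‖₊ : ℝ≥0∞) ^ 2 * (‖Hfun g a b k x‖₊ : ℝ≥0∞) +
            (‖f (x - (k : ℝ) / b)‖₊ : ℝ≥0∞) ^ 2 * (‖Hfun g a b k x‖₊ : ℝ≥0∞) := by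
          refine lintegral_mono fun x => ?_
          rw [← add_mul, ← mul_assoc]
          exact mul_le_mul_left (two_mul_le_sq_add_sq _ _) _
      _ = A k + ∫⁻ x : ℝ, (‖f (x - (k : ℝ) / b)‖₊ : ℝ≥0∞) ^ 2 *
            (‖Hfun g a b k x‖₊ : ℝ≥0∞) := lintegral_add_left' (hφmeas k) _
      _ = A k + A (-k) := by rw [hBA k]
  -- the index equivalence `k ↦ -k` on nonzero integers
  have sumneg : ∑' k : {k : ℤ // k ≠ 0}, A (-(k : ℤ)) = ∑' k : {k : ℤ // k ≠ 0}, A k :=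
    Equiv.tsum_eq
      (⟨fun k => ⟨-k.1, neg_ne_zero.mpr k.2⟩, fun k => ⟨-k.1, neg_ne_zero.mpr k.2⟩,
        fun k => by simp, fun k => by simp⟩ : {k : ℤ // k ≠ 0} ≃ {k : ℤ // k ≠ 0})
      (fun k : {k : ℤ // k ≠ 0} => A k)
  -- Step 3 : `∑ I k ≤ ∑ A k`.
  have step3 : ∑' k : {k : ℤ // k ≠ 0}, I k ≤ ∑' k : {k : ℤ // k ≠ 0}, A k := by
    have h2 : 2 * ∑' k : {k : ℤ // k ≠ 0}, I k ≤ 2 * ∑' k : {k : ℤ // k ≠ 0}, A k := by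
      have htwo : ∑' k : {k : ℤ // k ≠ 0}, (A (k : ℤ) + A (-(k : ℤ))) =
          2 * ∑' k : {k : ℤ // k ≠ 0}, A k := by
        rw [ENNReal.tsum_add, sumneg, two_mul]
      rw [← ENNReal.tsum_mul_left, ← htwo]
      exact ENNReal.tsum_le_tsum fun k => step2 k
    exact (ENNReal.mul_le_mul_iff_right (by norm_num) (by norm_num)).mp h2
  -- Step 4 : `∑ A k` equals the right-hand side.
  refine le_trans (ENNReal.tsum_le_tsum fun k => step1 k) (le_trans step3 (le_of_eq ?_))
  rw [← lintegral_tsum fun k : {k : ℤ // k ≠ 0} => hφmeas k]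
  refine lintegral_congr fun x => ?_
  rw [ENNReal.tsum_mul_left]
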